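/- Let X be a pointed finitely complete category. Then X satisfies the condition that every morphism with zero kernel is a monomorphism if and only if for every object B the kernel functor Ker_B : Pt_X(B) → X reflects terminal objects. -/

import Mathlib

open CategoryTheory CategoryTheory.Limits

universe v u

noncomputable section

variable {C : Type u} [Category.{v} C]

/-- The category of points over `B`: split epimorphisms over `B` with a chosen section. -/
structure Pt (B : C) where
  X : C
  p : X ⟶ B
  s : B ⟶ X
  sec : s ≫ p = 𝟙 B

@[ext]
structure PtHom {B : C} (P Q : Pt B) where
  hom : P.X ⟶ Q.X
  wp : hom ≫ Q.p = P.p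
  ws : P.s ≫ hom = Q.s

attribute [simp] Pt.sec PtHom.wp PtHom.ws

instance {B : C} : Category (Pt B) where
  Hom := PtHom
  id P := ⟨𝟙 P.X, by simp, by simp⟩
  comp f g := ⟨f.hom ≫ g.hom, by rw [Category.assoc, g.wp, f.wp],
    by rw [← Category.assoc, f.ws, g.ws]⟩
  id_comp f := by apply PtHom.ext; exact Category.id_comp f.hom
  comp_id f := by apply PtHom.ext; exact Category.comp_id f.hom
  assoc f g h := by apply PtHom.ext; exact Category.assoc f.hom g.hom h.hom

@[simp] lemma PtHom.comp_hom {B : C} {P Q R : Pt B} (f : P ⟶ Q) (g : Q ⟶ R) :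
    (f ≫ g).hom = f.hom ≫ g.hom := rfl

@[simp] lemma PtHom.id_hom {B : C} (P : Pt B) : (𝟙 P : P ⟶ P).hom = 𝟙 P.X := rfl

variable [HasZeroMorphisms C] [HasFiniteLimits C]

/-- The kernel functor `Pt_C(B) ⥤ C`, sending a point `(A, α, β)` to `Ker α`. -/
def KerF (B : C) : Pt B ⥤ C where
  obj P := kernel P.p
  map {P Q} f := kernel.map P.p Q.p f.hom (𝟙 B) (by simp)
  map_id P := by
    apply equalizer.hom_ext
    simp [kernel.map]
  map_comp f g := by
    apply equalizer.hom_ext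
    simp [kernel.map]

/-- A pointed finitely complete category satisfies "every morphism with zero kernel is a
monomorphism" iff every kernel functor `Ker_B : Pt_C(B) ⥤ C` reflects terminal objects. -/
theorem stmt9 [HasZeroObject C] :
    (∀ {A B : C} (f : A ⟶ B), IsZero (kernel f) → Mono f) ↔
      (∀ (B : C) (P : Pt B), IsTerminal ((KerF B).obj P) → Nonempty (IsTerminal P)) := by
  constructor
  · intro h B P hT
    have hz : IsZero (kernel P.p) := (IsZero.iff_id_eq_zero _).mpr (hT.hom_ext _ _)
    have : Mono P.p := h P.p hz
    refine ⟨IsTerminal.ofUniqueHom (fun Q => ⟨Q.p ≫ P.s, by simp, by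
      rw [← Category.assoc, Q.sec, Category.id_comp]⟩) fun Q m => ?_⟩
    apply PtHom.ext
    rw [← cancel_mono P.p]
    simp
  · intro h A B f hz
    set Q : Pt A := ⟨pullback f f, pullback.fst f f, pullback.diagonal f,
      pullback.diagonal_fst f⟩ with hQ
    have hι : kernel.ι Q.p = 0 := by
      have h1 : kernel.ι Q.p ≫ pullback.fst f f = 0 := kernel.condition _
      have h2 : kernel.ι Q.p ≫ pullback.snd f f = 0 := by
        have hc : (kernel.ι Q.p ≫ pullback.snd f f) ≫ f = 0 := by
          rw [Category.assoc, ← pullback.condition, ← Category.assoc, h1, zero_comp]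
        have hl : kernel.lift f _ hc = 0 := hz.eq_of_tgt _ _
        rw [← kernel.lift_ι f _ hc, hl, zero_comp]
      apply pullback.hom_ext <;> simp [h1, h2]
    have hzk : IsZero (kernel Q.p) := by
      rw [IsZero.iff_id_eq_zero]
      rw [← cancel_mono (kernel.ι Q.p), hι, comp_zero, comp_zero]
    obtain ⟨hT⟩ := h A Q hzk.isTerminal
    -- the unique endomorphism of Q gives fst ≫ diagonal = 𝟙
    have key : pullback.fst f f ≫ pullback.diagonal f = 𝟙 (pullback f f) := by
      have e1 : (⟨pullback.fst f f ≫ pullback.diagonal f, by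
            show (pullback.fst f f ≫ pullback.diagonal f) ≫ pullback.fst f f = pullback.fst f f
            rw [Category.assoc, pullback.diagonal_fst, Category.comp_id], by
            show pullback.diagonal f ≫ (pullback.fst f f ≫ pullback.diagonal f) = pullback.diagonal f
            rw [← Category.assoc, pullback.diagonal_fst, Category.id_comp]⟩ : Q ⟶ Q)
          = 𝟙 Q := hT.hom_ext _ _
      exact congrArg PtHom.hom e1
    constructor
    intro Z g₁ g₂ hg
    have l := pullback.lift g₁ g₂ hg
    have h1 : pullback.lift g₁ g₂ hg = g₁ ≫ pullback.diagonal f := by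
      rw [← Category.comp_id (pullback.lift g₁ g₂ hg), ← key, ← Category.assoc,
        pullback.lift_fst]
    have := pullback.lift_snd g₁ g₂ hg
    rw [h1, Category.assoc, pullback.diagonal_snd, Category.comp_id] at this
    exact this
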